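/- Let C̄ be a closed convex body in a real Hilbert space, and let x_n, x_m ∈ ∂C̄ with unit outward normals y_n, y_m (i.e., ⟨z, y_k⟩ ≤ ⟨x_k, y_k⟩ for all z ∈ C̄) such that the closed balls of radius ε_n around x_n and ε_m around x_m intersected with ∂C̄ lie in the supporting hyperplanes {z : ⟨z,y_n⟩ = ⟨x_n,y_n⟩} and {z : ⟨z,y_m⟩ = ⟨x_m,y_m⟩} respectively (equivalently, the flat pieces of radius ε_n, ε_m lie in C̄), and ‖y_n − y_m‖ ≥ ε_n + ε_m. Then for any 0 < δ_n ≤ ε_n²/3 the segment [x_n + δ_n y_n, x_m] meets the interior of C̄. -/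

import Mathlib

set_option maxHeartbeats 1600000
open scoped RealInnerProductSpace

theorem stmt_19 {X : Type*} [NormedAddCommGroup X] [InnerProductSpace ℝ X]
    (Cb : Set X) (hclosed : IsClosed Cb) (hconv : Convex ℝ Cb)
    (hbody : (interior Cb).Nonempty)
    (xn xm yn ym : X) (εn εm : ℝ)
    (hxn : xn ∈ frontier Cb) (hxm : xm ∈ frontier Cb)
    (hyn : ‖yn‖ = 1) (hym : ‖ym‖ = 1)
    (hsuppn : ∀ z ∈ Cb, ⟪z, yn⟫ ≤ ⟪xn, yn⟫)
    (hsuppm : ∀ z ∈ Cb, ⟪z, ym⟫ ≤ ⟪xm, ym⟫)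
    (hεn : 0 < εn) (hεm : 0 < εm)
    (hflatn : {z : X | ⟪z, yn⟫ = ⟪xn, yn⟫ ∧ ‖z - xn‖ ≤ εn} ⊆ Cb)
    (hflatm : {z : X | ⟪z, ym⟫ = ⟪xm, ym⟫ ∧ ‖z - xm‖ ≤ εm} ⊆ Cb)
    (hsep : εn + εm ≤ ‖yn - ym‖) :
    ∀ δ : ℝ, 0 < δ → δ ≤ εn ^ 2 / 3 →
      (segment ℝ (xn + δ • yn) xm ∩ interior Cb).Nonempty := by
  intro δ hδ hδ3
  have hCbxn : xn ∈ Cb := hclosed.frontier_subset hxn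
  have hCbxm : xm ∈ Cb := hclosed.frontier_subset hxm
  obtain ⟨s, hs⟩ : ∃ s : ℝ, s = ⟪yn, ym⟫ := ⟨_, rfl⟩
  have hcomm : ⟪ym, yn⟫ = s := by rw [hs]; exact real_inner_comm _ _
  obtain ⟨N, hN⟩ : ∃ N : ℝ, N = ‖ym - s • yn‖ := ⟨_, rfl⟩
  have hN0 : (0:ℝ) ≤ N := hN ▸ norm_nonneg _
  have hN2 : N ^ 2 = 1 - s ^ 2 := by
    rw [hN, norm_sub_sq_real, real_inner_smul_right, hcomm, norm_smul, hym, hyn,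
      Real.norm_eq_abs, mul_one, sq_abs]
    ring
  have hs1 : s ≤ 1 := by
    have := real_inner_le_norm yn ym
    rw [hyn, hym, ← hs] at this; simpa using this
  have hsepsq : (εn + εm) ^ 2 ≤ 2 - 2 * s := by
    have h1 : (εn + εm) ^ 2 ≤ ‖yn - ym‖ ^ 2 := by
      have := pow_le_pow_left₀ (by positivity) hsep 2
      simpa using this
    have h2 : ‖yn - ym‖ ^ 2 = 2 - 2 * s := by
      rw [norm_sub_sq_real, hyn, hym, ← hs]; ring
    linarith
  -- Key estimate from the flat at xn
  have hA : εn * N ≤ ⟪xm - xn, ym⟫ := by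
    rcases eq_or_lt_of_le hN0 with h0 | hNpos
    · have := hsuppm xn hCbxn
      rw [inner_sub_left]
      nlinarith
    · have hzCb : xn + (εn / N) • (ym - s • yn) ∈ Cb := by
        apply hflatn
        constructor
        · rw [inner_add_left, real_inner_smul_left, inner_sub_left, real_inner_smul_left,
            hcomm, real_inner_self_eq_norm_sq, hyn]
          ring
        · have h1 : xn + (εn / N) • (ym - s • yn) - xn = (εn / N) • (ym - s • yn) := by abel
          rw [h1, norm_smul, ← hN, Real.norm_eq_abs,
            abs_of_pos (by positivity : (0:ℝ) < εn / N), div_mul_cancel₀ _ (ne_of_gt hNpos)]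
      have hw : ⟪(εn / N) • (ym - s • yn), ym⟫ = εn * N := by
        rw [real_inner_smul_left, inner_sub_left, real_inner_smul_left,
          real_inner_self_eq_norm_sq, hym, ← hs]
        have hNne : N ≠ 0 := ne_of_gt hNpos
        field_simp
        nlinarith [hN2]
      have := hsuppm _ hzCb
      rw [inner_add_left, hw] at this
      rw [inner_sub_left]
      linarith
  -- p := xn + δ • yn is strictly below xm's supporting hyperplane
  have hpym : ⟪xn + δ • yn, ym⟫ = ⟪xn, ym⟫ + δ * s := by
    rw [inner_add_left, real_inner_smul_left, ← hs]
  obtain ⟨μ, hμdef⟩ : ∃ μ : ℝ, μ = ⟪xm, ym⟫ - ⟪xn + δ • yn, ym⟫ := ⟨_, rfl⟩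
  have hμpos : 0 < μ := by
    have hxmxn : ⟪xm - xn, ym⟫ = ⟪xm, ym⟫ - ⟪xn, ym⟫ := inner_sub_left _ _ _
    have key : δ * s < εn * N := by
      rcases lt_trichotomy s 0 with hs0 | hs0 | hs0
      · have h1 : 0 < δ * (-s) := mul_pos hδ (by linarith)
        have h2 : 0 ≤ εn * N := mul_nonneg hεn.le hN0
        nlinarith
      · have hNpos : 0 < N := by nlinarith [hN2]
        have h2 : 0 < εn * N := mul_pos hεn hNpos
        rw [hs0, mul_zero]; exact h2
      · have h1s : εn ^ 2 < 2 - 2 * s := by nlinarith [mul_pos hεn hεm, sq_nonneg εm]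
        have hNlb : εn ^ 2 / 2 < N ^ 2 := by
          nlinarith [mul_nonneg hs0.le (sub_nonneg.mpr hs1)]
        have hNgt : εn / 2 < N := by nlinarith [sq_nonneg (N + εn / 2)]
        have hδs : δ * s ≤ εn ^ 2 / 3 := by nlinarith [mul_le_mul_of_nonneg_left hs1 hδ.le]
        have h3 : εn * (εn / 2) < εn * N := by
          exact mul_lt_mul_of_pos_left hNgt hεn
        nlinarith [mul_pos hεn hεn]
    rw [hμdef, hpym]
    linarith
  -- interior point a, strictly below xm's hyperplane by γ
  obtain ⟨a, ha⟩ := hbody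
  obtain ⟨ρ, hρpos, hball⟩ := Metric.isOpen_iff.mp isOpen_interior a ha
  have hballCb : Metric.ball a ρ ⊆ Cb := hball.trans interior_subset
  obtain ⟨γ, hγdef⟩ : ∃ γ : ℝ, γ = ⟪xm, ym⟫ - ⟪a, ym⟫ := ⟨_, rfl⟩
  have hγpos : 0 < γ := by
    have hz : a + (ρ / 2) • ym ∈ Cb := by
      apply hballCb
      rw [Metric.mem_ball, dist_eq_norm]
      have h1 : a + (ρ / 2) • ym - a = (ρ / 2) • ym := by abel
      rw [h1, norm_smul, hym, Real.norm_eq_abs, abs_of_pos (by positivity)]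
      linarith
    have := hsuppm _ hz
    rw [inner_add_left, real_inner_smul_left, real_inner_self_eq_norm_sq, hym] at this
    rw [hγdef]
    nlinarith
  obtain ⟨P, hPdef⟩ : ∃ P : ℝ, P = ‖(xn + δ • yn) - xm‖ := ⟨_, rfl⟩
  have hPpos : 0 < P := by
    rw [hPdef, norm_pos_iff, sub_ne_zero]
    intro h
    rw [hμdef, h] at hμpos
    simp at hμpos
  obtain ⟨M, hMdef⟩ : ∃ M : ℝ, M = ‖xm - a‖ := ⟨_, rfl⟩
  have hM0 : (0:ℝ) ≤ M := hMdef ▸ norm_nonneg _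
  obtain ⟨K, hK⟩ : ∃ K : ℝ, K = P + μ * M / γ := ⟨_, rfl⟩
  have hKpos : 0 < K := by
    have h1 : 0 ≤ μ * M / γ := by positivity
    rw [hK]; linarith
  obtain ⟨t, ht⟩ : ∃ t : ℝ, t = min (1/2) (min (γ / (2 * μ)) (εm / (2 * K))) := ⟨_, rfl⟩
  have ht0 : 0 < t := by
    rw [ht]; exact lt_min (by norm_num) (lt_min (by positivity) (by positivity))
  have ht1 : t ≤ 1/2 := ht ▸ min_le_left _ _
  have htγ : t ≤ γ / (2 * μ) := ht ▸ le_trans (min_le_right _ _) (min_le_left _ _)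
  have htK : t ≤ εm / (2 * K) := ht ▸ le_trans (min_le_right _ _) (min_le_right _ _)
  obtain ⟨τ, hτ⟩ : ∃ τ : ℝ, τ = t * μ / γ := ⟨_, rfl⟩
  have hτ0 : 0 < τ := by rw [hτ]; positivity
  have hτh : τ ≤ 1/2 := by
    rw [hτ, div_le_iff₀ hγpos]
    rw [le_div_iff₀ (by positivity : (0:ℝ) < 2 * μ)] at htγ
    nlinarith
  have h1τ : (0:ℝ) < 1 - τ := by linarith
  have htK2 : t * K ≤ εm / 2 := by
    rw [le_div_iff₀ (by positivity : (0:ℝ) < 2 * K)] at htK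
    nlinarith
  have hτγ : τ * γ = t * μ := by rw [hτ]; field_simp
  -- the candidate point r on the segment
  obtain ⟨r, hr⟩ : ∃ r : X, r = t • (xn + δ • yn) + (1 - t) • xm := ⟨_, rfl⟩
  have hrseg : r ∈ segment ℝ (xn + δ • yn) xm :=
    ⟨t, 1 - t, ht0.le, by linarith, by ring, hr.symm⟩
  obtain ⟨q, hq⟩ : ∃ q : X, q = (1 - τ)⁻¹ • (r - τ • a) := ⟨_, rfl⟩
  have hqs : (1 - τ) • q = r - τ • a := by
    rw [hq, smul_smul, mul_inv_cancel₀ (ne_of_gt h1τ), one_smul]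
  have hqcombo : τ • a + (1 - τ) • q = r := by rw [hqs]; abel
  -- q lies on xm's hyperplane
  have hrym : ⟪r, ym⟫ = ⟪xm, ym⟫ - t * μ := by
    rw [hr, inner_add_left, real_inner_smul_left, real_inner_smul_left, hμdef]
    ring
  have haym : ⟪a, ym⟫ = ⟪xm, ym⟫ - γ := by rw [hγdef]; ring
  have hqym : ⟪q, ym⟫ = ⟪xm, ym⟫ := by
    rw [hq, real_inner_smul_left, inner_sub_left, real_inner_smul_left, hrym, haym,
      inv_mul_eq_iff_eq_mul₀ (ne_of_gt h1τ)]
    linear_combination hτγ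
  -- q is within εm of xm
  have hxmeq : (1 - τ)⁻¹ • ((1 - τ) • xm) = xm := by
    rw [smul_smul, inv_mul_cancel₀ (ne_of_gt h1τ), one_smul]
  have hqd : q - xm = (1 - τ)⁻¹ • (t • ((xn + δ • yn) - xm) + τ • (xm - a)) := by
    have h1 : (1 - τ)⁻¹ • ((r - τ • a) - (1 - τ) • xm) = q - xm := by
      rw [smul_sub, hxmeq, ← hq]
    rw [← h1]
    congr 1
    rw [hr]
    module
  have hqxm : ‖q - xm‖ ≤ εm := by
    rw [hqd, norm_smul, Real.norm_eq_abs, abs_of_pos (by positivity : (0:ℝ) < (1 - τ)⁻¹)]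
    have hnb : ‖t • ((xn + δ • yn) - xm) + τ • (xm - a)‖ ≤ t * P + τ * M := by
      calc ‖t • ((xn + δ • yn) - xm) + τ • (xm - a)‖
          ≤ ‖t • ((xn + δ • yn) - xm)‖ + ‖τ • (xm - a)‖ := norm_add_le _ _
        _ = t * P + τ * M := by
            rw [norm_smul, norm_smul, Real.norm_eq_abs, Real.norm_eq_abs,
              abs_of_pos ht0, abs_of_pos hτ0, ← hPdef, ← hMdef]
    have htPM : t * P + τ * M = t * K := by
      rw [hK, hτ]; field_simp
    have hinv : (1 - τ)⁻¹ ≤ 2 := by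
      rw [inv_le_comm₀ h1τ (by norm_num : (0:ℝ) < 2)]
      linarith
    calc (1 - τ)⁻¹ * ‖t • ((xn + δ • yn) - xm) + τ • (xm - a)‖
        ≤ 2 * (t * K) :=
          mul_le_mul hinv (hnb.trans (le_of_eq htPM)) (norm_nonneg _) (by norm_num)
      _ ≤ 2 * (εm / 2) := by linarith
      _ = εm := by ring
  have hqCb : q ∈ Cb := hflatm ⟨hqym, hqxm⟩
  have hrint : r ∈ interior Cb :=
    hqcombo ▸ hconv.combo_interior_self_mem_interior ha hqCb hτ0 (by linarith) (by ring)
  exact ⟨r, hrseg, hrint⟩
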